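/- Any set of unit vectors in ℝᵈ such that among any three of them some two are orthogonal has cardinality at most 2d. -/

import Mathlib

theorem stmt14 (d : ℕ) (S : Finset (EuclideanSpace ℝ (Fin d)))
    (hunit : ∀ v ∈ S, ‖v‖ = 1)
    (horth : ∀ x ∈ S, ∀ y ∈ S, ∀ z ∈ S, x ≠ y → y ≠ z → x ≠ z →
      inner ℝ x y = (0 : ℝ) ∨ inner ℝ y z = (0 : ℝ) ∨ inner ℝ x z = (0 : ℝ)) :
    S.card ≤ 2 * d := by
  classical
  have hinner : ∀ v w : EuclideanSpace ℝ (Fin d), (inner ℝ v w : ℝ) = ∑ i, v i * w i := by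
    intro v w
    simp [PiLp.inner_apply, RCLike.inner_apply, mul_comm]
  have hself : ∀ v ∈ S, (inner ℝ v v : ℝ) = 1 := by
    intro v hv
    rw [real_inner_self_eq_norm_mul_norm, hunit v hv, one_mul]
  -- Bessel's inequality step
  have bessel : ∀ v ∈ S, (∑ w ∈ S.erase v, (inner ℝ v w : ℝ) ^ 2) ≤ 1 := by
    intro v hv
    set N : Finset (EuclideanSpace ℝ (Fin d)) :=
      (S.erase v).filter (fun w => (inner ℝ v w : ℝ) ≠ 0) with hN
    have hsum : (∑ w ∈ S.erase v, (inner ℝ v w : ℝ) ^ 2) = ∑ w ∈ N, (inner ℝ v w : ℝ) ^ 2 := by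
      rw [hN]
      refine (Finset.sum_filter_of_ne ?_).symm
      intro w _ hw
      intro h0
      exact hw (by rw [h0]; ring)
    have hNorth : Orthonormal ℝ (fun w : (↑N : Set (EuclideanSpace ℝ (Fin d))) =>
        (w : EuclideanSpace ℝ (Fin d))) := by
      rw [orthonormal_subtype_iff_ite]
      intro a ha b hb
      simp only [hN, Finset.coe_filter, Set.mem_setOf_eq, Finset.mem_erase] at ha hb
      obtain ⟨⟨hav, haS⟩, hva⟩ := ha
      obtain ⟨⟨hbv, hbS⟩, hvb⟩ := hb
      by_cases hab : a = b
      · subst hab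
        simp [hself a haS, hunit a haS]
      · simp only [hab, if_false]
        rcases horth a haS b hbS v hv hab hbv hav with h | h | h
        · exact h
        · exact absurd (by rw [← h, real_inner_comm]) hvb
        · exact absurd (by rw [← h, real_inner_comm]) hva
    have hbes := hNorth.sum_inner_products_le (s := Finset.univ) v
    rw [hunit v hv, one_pow] at hbes
    rw [hsum]
    calc (∑ w ∈ N, (inner ℝ v w : ℝ) ^ 2)
        = ∑ w : (↑N : Set (EuclideanSpace ℝ (Fin d))),
            ‖(inner ℝ (w : EuclideanSpace ℝ (Fin d)) v : ℝ)‖ ^ 2 := by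
          rw [← Finset.sum_coe_sort N (fun w => (inner ℝ v w : ℝ) ^ 2)]
          refine Finset.sum_congr rfl fun w _ => ?_
          rw [Real.norm_eq_abs, sq_abs, real_inner_comm]
      _ ≤ 1 := hbes
  -- the matrix B = A Aᵀ
  set F : Fin d → Fin d → ℝ := fun i j => ∑ v ∈ S, v i * v j with hF
  -- expansion of the double sum of squared inner ℝ products
  have hexp : (∑ v ∈ S, ∑ w ∈ S, (inner ℝ v w : ℝ) ^ 2) = ∑ i, ∑ j, (F i j) ^ 2 := by
    calc (∑ v ∈ S, ∑ w ∈ S, (inner ℝ v w : ℝ) ^ 2)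
        = ∑ v ∈ S, ∑ w ∈ S, ∑ i, ∑ j, (v i * v j) * (w i * w j) := by
          refine Finset.sum_congr rfl fun v _ => Finset.sum_congr rfl fun w _ => ?_
          rw [hinner, sq, Finset.sum_mul_sum]
          exact Finset.sum_congr rfl fun i _ => Finset.sum_congr rfl fun j _ => by ring
      _ = ∑ v ∈ S, ∑ i, ∑ j, ∑ w ∈ S, (v i * v j) * (w i * w j) := by
          refine Finset.sum_congr rfl fun v _ => ?_
          rw [Finset.sum_comm]
          exact Finset.sum_congr rfl fun i _ => Finset.sum_comm
      _ = ∑ i, ∑ j, ∑ v ∈ S, ∑ w ∈ S, (v i * v j) * (w i * w j) := by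
          rw [Finset.sum_comm]
          exact Finset.sum_congr rfl fun i _ => Finset.sum_comm
      _ = ∑ i, ∑ j, (F i j) ^ 2 := by
          refine Finset.sum_congr rfl fun i _ => Finset.sum_congr rfl fun j _ => ?_
          rw [hF, sq, Finset.sum_mul_sum]
  -- trace of F equals card S
  have htr : (∑ i, F i i) = (S.card : ℝ) := by
    calc (∑ i, F i i) = ∑ v ∈ S, ∑ i, v i * v i := Finset.sum_comm
      _ = ∑ v ∈ S, (inner ℝ v v : ℝ) := by
          exact Finset.sum_congr rfl fun v _ => (hinner v v).symm
      _ = ∑ v ∈ S, (1 : ℝ) := Finset.sum_congr rfl fun v hv => hself v hv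
      _ = (S.card : ℝ) := by simp
  -- Cauchy-Schwarz on the diagonal
  have hCS : ((S.card : ℝ)) ^ 2 ≤ (d : ℝ) * ∑ i, (F i i) ^ 2 := by
    have := Finset.sum_mul_sq_le_sq_mul_sq Finset.univ (fun _ : Fin d => (1 : ℝ))
      (fun i => F i i)
    simp only [one_mul, one_pow] at this
    calc ((S.card : ℝ)) ^ 2 = (∑ i, F i i) ^ 2 := by rw [htr]
      _ ≤ (∑ _i : Fin d, (1 : ℝ)) * ∑ i, (F i i) ^ 2 := this
      _ = (d : ℝ) * ∑ i, (F i i) ^ 2 := by simp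
  have hdiag : (∑ i, (F i i) ^ 2) ≤ ∑ i, ∑ j, (F i j) ^ 2 := by
    refine Finset.sum_le_sum fun i _ => ?_
    exact Finset.single_le_sum (fun j _ => sq_nonneg (F i j)) (Finset.mem_univ i)
  -- bound the double sum using Bessel
  have hT2 : (∑ v ∈ S, ∑ w ∈ S, (inner ℝ v w : ℝ) ^ 2) ≤ 2 * (S.card : ℝ) := by
    calc (∑ v ∈ S, ∑ w ∈ S, (inner ℝ v w : ℝ) ^ 2)
        = ∑ v ∈ S, ((∑ w ∈ S.erase v, (inner ℝ v w : ℝ) ^ 2) + (inner ℝ v v : ℝ) ^ 2) := by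
          refine Finset.sum_congr rfl fun v hv => ?_
          rw [Finset.sum_erase_add S _ hv]
      _ ≤ ∑ v ∈ S, (2 : ℝ) := by
          refine Finset.sum_le_sum fun v hv => ?_
          have h1 := bessel v hv
          have h2 : (inner ℝ v v : ℝ) ^ 2 = 1 := by rw [hself v hv]; ring
          linarith
      _ = 2 * (S.card : ℝ) := by simp [mul_comm]
  -- put it together
  have key : ((S.card : ℝ)) ^ 2 ≤ (d : ℝ) * (2 * (S.card : ℝ)) := by
    calc ((S.card : ℝ)) ^ 2 ≤ (d : ℝ) * ∑ i, (F i i) ^ 2 := hCS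
      _ ≤ (d : ℝ) * ∑ i, ∑ j, (F i j) ^ 2 := by
          exact mul_le_mul_of_nonneg_left hdiag (by positivity)
      _ = (d : ℝ) * ∑ v ∈ S, ∑ w ∈ S, (inner ℝ v w : ℝ) ^ 2 := by rw [hexp]
      _ ≤ (d : ℝ) * (2 * (S.card : ℝ)) := by
          exact mul_le_mul_of_nonneg_left hT2 (by positivity)
  rcases Nat.eq_zero_or_pos S.card with h0 | hpos
  · simp [h0]
  · have hcpos : (0 : ℝ) < (S.card : ℝ) := by exact_mod_cast hpos
    have : (S.card : ℝ) ≤ 2 * (d : ℝ) := by nlinarith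
    exact_mod_cast this
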